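/- arXiv:2509.15889 — 4 statements merged into one kernel-verified Lean document; each statement's English description precedes it below -/
import Mathlib

section
/- Suppose the Hill coefficients satisfy n_i ≥ 1 for all i ∈ {1,…,n} and the cooperativity coefficient satisfies m ≥ 1. Then the first partial derivatives of the regulatory function H are uniformly bounded on the positive orthant: there exists a constant C > 0 such that |∂H/∂y_k(y)| ≤ C for every k ∈ {1,…,n} and every y in the open positive orthant {y ∈ ℝⁿ : y_i > 0 for all i}. -/
set_option maxHeartbeats 2000000 in
/-- If all Hill coefficients satisfy `n_i ≥ 1` and the cooperativity
coefficient satisfies `m ≥ 1`, then the first partial derivatives of the regulatory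
function `H = A / (A + B)` are uniformly bounded on the open positive orthant. -/
theorem regulatory_function_bounded_partial_derivatives
    (n : ℕ) (𝒜 ℐ : Finset (Fin n))
    (w : Fin n → ℝ) (hw : ∀ i ∈ 𝒜, 0 < w i)
    (ν : Fin n → ℝ) (hν : ∀ i, 1 ≤ ν i)
    (m : ℝ) (hm : 1 ≤ m)
    (K : ℝ) (hK : 0 < K)
    (Kinh : Fin n → ℝ) (hKinh : ∀ j ∈ ℐ, 0 < Kinh j)
    (A B H : (Fin n → ℝ) → ℝ)
    (hA : ∀ y, A y = (∑ i ∈ 𝒜, w i * (y i) ^ (ν i)) ^ m)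
    (hB : ∀ y, B y = K ^ m * (1 + ∑ j ∈ ℐ, (y j / Kinh j) ^ (ν j)) ^ m)
    (hH : ∀ y, H y = A y / (A y + B y)) :
    ∃ C > 0, ∀ k : Fin n, ∀ y : Fin n → ℝ, (∀ i, 0 < y i) →
      |fderiv ℝ H y (Pi.single k 1)| ≤ C := by
  have hm0 : (0:ℝ) < m := lt_of_lt_of_le one_pos hm
  have hν0 : ∀ i, (0:ℝ) < ν i := fun i => lt_of_lt_of_le one_pos (hν i)
  set C1 : Fin n → ℝ := fun k => m * ν k * w k ^ ((1:ℝ)/ν k) / K ^ ((1:ℝ)/ν k) with hC1def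
  set C2 : Fin n → ℝ := fun k => m * ν k / Kinh k with hC2def
  have hC1nn : ∀ k ∈ 𝒜, 0 ≤ C1 k := by
    intro k hk
    have h1 : (0:ℝ) ≤ w k ^ ((1:ℝ)/ν k) := (Real.rpow_pos_of_pos (hw k hk) _).le
    have h2 : (0:ℝ) < K ^ ((1:ℝ)/ν k) := Real.rpow_pos_of_pos hK _
    have := (hν0 k).le
    simp only [hC1def]
    positivity
  have hC2nn : ∀ k ∈ ℐ, 0 ≤ C2 k := by
    intro k hk
    have := (hKinh k hk).le
    have := (hν0 k).le
    simp only [hC2def]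
    positivity
  have hs1 : 0 ≤ ∑ k ∈ 𝒜, C1 k := Finset.sum_nonneg hC1nn
  have hs2 : 0 ≤ ∑ k ∈ ℐ, C2 k := Finset.sum_nonneg hC2nn
  refine ⟨1 + ((∑ k ∈ 𝒜, C1 k) + ∑ k ∈ ℐ, C2 k), by linarith, ?_⟩
  intro k y hy
  by_cases h𝒜 : 𝒜 = ∅
  · have hH0 : H = fun _ => (0:ℝ) := by
      funext z
      rw [hH, hA, h𝒜]
      simp [Real.zero_rpow (by positivity : m ≠ 0)]
    rw [hH0]
    simp only [fderiv_fun_const, Pi.zero_apply, ContinuousLinearMap.zero_apply, abs_zero]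
    linarith
  · have hAne : 𝒜.Nonempty := Finset.nonempty_of_ne_empty h𝒜
    set Sy := ∑ i ∈ 𝒜, w i * y i ^ ν i with hSydef
    set Ty := 1 + ∑ j ∈ ℐ, (y j / Kinh j) ^ ν j with hTydef
    have hSpos : 0 < Sy :=
      Finset.sum_pos (fun i hi => mul_pos (hw i hi) (Real.rpow_pos_of_pos (hy i) _)) hAne
    have hTsum : 0 ≤ ∑ j ∈ ℐ, (y j / Kinh j) ^ ν j :=
      Finset.sum_nonneg fun j hj => Real.rpow_nonneg (div_pos (hy j) (hKinh j hj)).le _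
    have hT1 : 1 ≤ Ty := by rw [hTydef]; linarith
    have hTpos : 0 < Ty := lt_of_lt_of_le one_pos hT1
    -- derivative of the inner sums
    set LS : (Fin n → ℝ) →L[ℝ] ℝ :=
      ∑ i ∈ 𝒜, (w i * (ν i * y i ^ (ν i - 1))) • ContinuousLinearMap.proj i with hLSdef
    have hLS : HasFDerivAt (fun z : Fin n → ℝ => ∑ i ∈ 𝒜, w i * z i ^ ν i) LS y := by
      rw [hLSdef]
      refine HasFDerivAt.fun_sum fun i hi => ?_
      have h := ((Real.hasDerivAt_rpow_const (p := ν i) (Or.inl (hy i).ne')).const_mul (w i)).comp_hasFDerivAt y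
        (hasFDerivAt_apply (𝕜 := ℝ) i y)
      exact h
    set LT : (Fin n → ℝ) →L[ℝ] ℝ :=
      ∑ j ∈ ℐ, (ν j * (y j / Kinh j) ^ (ν j - 1) * (1 / Kinh j)) • ContinuousLinearMap.proj j
      with hLTdef
    have hLT : HasFDerivAt (fun z : Fin n → ℝ => 1 + ∑ j ∈ ℐ, (z j / Kinh j) ^ ν j) LT y := by
      rw [hLTdef]
      refine HasFDerivAt.const_add 1 ?_
      refine HasFDerivAt.fun_sum fun j hj => ?_
      have h1 : HasDerivAt (fun x : ℝ => x / Kinh j) (1 / Kinh j) (y j) :=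
        (hasDerivAt_id (y j)).div_const (Kinh j)
      have h2 : HasDerivAt (fun u : ℝ => u ^ ν j) (ν j * (y j / Kinh j) ^ (ν j - 1))
          (y j / Kinh j) :=
        Real.hasDerivAt_rpow_const (Or.inl (div_pos (hy j) (hKinh j hj)).ne')
      have hd : HasDerivAt (fun x : ℝ => (x / Kinh j) ^ ν j)
          (ν j * (y j / Kinh j) ^ (ν j - 1) * (1 / Kinh j)) (y j) := by have h := h2.comp (y j) h1; exact h
      have h := hd.comp_hasFDerivAt y (hasFDerivAt_apply (𝕜 := ℝ) j y)
      exact h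
    -- derivative of A and B parts
    set DA := (m * Sy ^ (m - 1)) • LS with hDAdef
    have hDA : HasFDerivAt (fun z : Fin n → ℝ => (∑ i ∈ 𝒜, w i * z i ^ ν i) ^ m) DA y :=
      by have h := (Real.hasDerivAt_rpow_const (p := m) (Or.inl hSpos.ne')).comp_hasFDerivAt y hLS; exact h
    set DB := (K ^ m * (m * Ty ^ (m - 1))) • LT with hDBdef
    have hDB : HasFDerivAt
        (fun z : Fin n → ℝ => K ^ m * (1 + ∑ j ∈ ℐ, (z j / Kinh j) ^ ν j) ^ m) DB y :=
      by have h := ((Real.hasDerivAt_rpow_const (p := m) (Or.inl hTpos.ne')).const_mul (K ^ m)).comp_hasFDerivAt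
          y hLT; exact h
    set den := Sy ^ m + K ^ m * Ty ^ m with hdendef
    have ha0 : 0 < Sy ^ m := Real.rpow_pos_of_pos hSpos m
    have hb0 : 0 < K ^ m * Ty ^ m :=
      mul_pos (Real.rpow_pos_of_pos hK m) (Real.rpow_pos_of_pos hTpos m)
    have hden : 0 < den := by rw [hdendef]; linarith
    have hdsum : HasFDerivAt (fun z : Fin n → ℝ =>
        (∑ i ∈ 𝒜, w i * z i ^ ν i) ^ m
          + K ^ m * (1 + ∑ j ∈ ℐ, (z j / Kinh j) ^ ν j) ^ m) (DA + DB) y := hDA.add hDB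
    have hinv : HasFDerivAt (fun z : Fin n → ℝ =>
        ((∑ i ∈ 𝒜, w i * z i ^ ν i) ^ m
          + K ^ m * (1 + ∑ j ∈ ℐ, (z j / Kinh j) ^ ν j) ^ m)⁻¹)
        ((-(den ^ 2)⁻¹) • (DA + DB)) y :=
      (hasDerivAt_inv hden.ne').comp_hasFDerivAt y hdsum
    have hF : HasFDerivAt H
        ((Sy ^ m) • ((-(den ^ 2)⁻¹) • (DA + DB)) + den⁻¹ • DA) y := by
      have hHF : H = fun z : Fin n → ℝ =>
          (∑ i ∈ 𝒜, w i * z i ^ ν i) ^ m *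
            ((∑ i ∈ 𝒜, w i * z i ^ ν i) ^ m
              + K ^ m * (1 + ∑ j ∈ ℐ, (z j / Kinh j) ^ ν j) ^ m)⁻¹ := by
        funext z
        rw [hH, hA, hB, div_eq_mul_inv]
      rw [hHF]
      exact hDA.mul hinv
    rw [hF.fderiv]
    -- evaluate the linear maps at the basis vector
    have hLSv : LS (Pi.single k 1) = if k ∈ 𝒜 then w k * (ν k * y k ^ (ν k - 1)) else 0 := by
      rw [hLSdef]
      simp only [ContinuousLinearMap.coe_sum', Finset.sum_apply,
        ContinuousLinearMap.coe_smul', Pi.smul_apply, ContinuousLinearMap.proj_apply,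
        Pi.single_apply, smul_eq_mul, mul_ite, mul_one, mul_zero]
      exact Finset.sum_ite_eq' 𝒜 k _
    have hLTv : LT (Pi.single k 1) =
        if k ∈ ℐ then ν k * (y k / Kinh k) ^ (ν k - 1) * (1 / Kinh k) else 0 := by
      rw [hLTdef]
      simp only [ContinuousLinearMap.coe_sum', Finset.sum_apply,
        ContinuousLinearMap.coe_smul', Pi.smul_apply, ContinuousLinearMap.proj_apply,
        Pi.single_apply, smul_eq_mul, mul_ite, mul_one, mul_zero]
      exact Finset.sum_ite_eq' ℐ k _
    set sk := if k ∈ 𝒜 then w k * (ν k * y k ^ (ν k - 1)) else 0 with hskdef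
    set tk := if k ∈ ℐ then ν k * (y k / Kinh k) ^ (ν k - 1) * (1 / Kinh k) else 0 with htkdef
    have hval : ((Sy ^ m) • ((-(den ^ 2)⁻¹) • (DA + DB)) + den⁻¹ • DA) (Pi.single k 1)
        = ((K ^ m * Ty ^ m) * (m * Sy ^ (m - 1) * sk)
            - Sy ^ m * (K ^ m * (m * Ty ^ (m - 1)) * tk)) / den ^ 2 := by
      simp only [ContinuousLinearMap.add_apply, ContinuousLinearMap.smul_apply,
        ContinuousLinearMap.coe_smul', Pi.smul_apply, hDAdef, hDBdef, hLSv, hLTv,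
        smul_eq_mul]
      have h2 : den ≠ 0 := hden.ne'
      field_simp
      rw [hdendef]
      ring
    rw [hval]
    -- nonnegativity of the pieces
    have hsk0 : 0 ≤ sk := by
      rw [hskdef]
      split_ifs with h
      · have := (hw k h).le
        have := (hν0 k).le
        have := (Real.rpow_nonneg (hy k).le (ν k - 1))
        positivity
      · exact le_refl 0
    have htk0 : 0 ≤ tk := by
      rw [htkdef]
      split_ifs with h
      · have h1 := (hKinh k h).le
        have h2 := (hν0 k).le
        have h3 : (0:ℝ) ≤ (y k / Kinh k) ^ (ν k - 1) :=
          Real.rpow_nonneg (div_pos (hy k) (hKinh k h)).le _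
        positivity
      · exact le_refl 0
    have hνk0 : (ν k) ≠ 0 := (hν0 k).ne'
    clear_value LS LT DA DB
    clear hval hLSv hLTv hF hinv hdsum hDB hDA hLT hLS hLSdef hLTdef hDAdef hDBdef LS LT DA DB
    -- the two key termwise bounds
    have key1 : (K ^ m * Ty ^ m) * (m * Sy ^ (m - 1) * sk) / den ^ 2
        ≤ (if k ∈ 𝒜 then C1 k else 0) := by
      by_cases hk : k ∈ 𝒜
      · rw [if_pos hk]
        set θ : ℝ := 1 / (m * ν k) with hθdef
        have hmν1 : (1:ℝ) ≤ m * ν k := by nlinarith [hm, hν k]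
        have hθpos : 0 < θ := by rw [hθdef]; positivity
        have hθ1 : θ ≤ 1 := by rw [hθdef, div_le_one (by linarith)]; linarith
        set W : ℝ := m * ν k * w k ^ ((1:ℝ) / ν k) with hWdef
        have hWnn : 0 ≤ W := by
          have := (Real.rpow_pos_of_pos (hw k hk) ((1:ℝ)/ν k)).le
          rw [hWdef]; positivity
        -- step 1 : bound on sk
        have hP : m * Sy ^ (m - 1) * sk ≤ W * Sy ^ (m - 1 / ν k) := by
          rw [hskdef, if_pos hk]
          have h1 : w k * y k ^ ν k ≤ Sy := by
            rw [hSydef]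
            exact Finset.single_le_sum
              (fun i hi => mul_nonneg (hw i hi).le (Real.rpow_nonneg (hy i).le _)) hk
          have h2 : y k ^ ν k ≤ Sy / w k := by
            rw [le_div_iff₀ (hw k hk)]
            nlinarith
          have h3 : y k ^ (ν k - 1) ≤ (Sy / w k) ^ ((ν k - 1) / ν k) := by
            have he : y k ^ (ν k - 1) = (y k ^ ν k) ^ ((ν k - 1) / ν k) := by
              rw [← Real.rpow_mul (hy k).le]
              congr 1
              field_simp
            rw [he]
            exact Real.rpow_le_rpow (Real.rpow_nonneg (hy k).le _) h2
              (div_nonneg (by linarith [hν k]) (hν0 k).le)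
          have h4 : (Sy / w k) ^ ((ν k - 1) / ν k)
              = Sy ^ ((ν k - 1) / ν k) / w k ^ ((ν k - 1) / ν k) :=
            Real.div_rpow hSpos.le (hw k hk).le _
          have h5 : w k / w k ^ ((ν k - 1) / ν k) = w k ^ ((1:ℝ) / ν k) := by
            nth_rewrite 1 [← Real.rpow_one (w k)]
            rw [← Real.rpow_sub (hw k hk)]
            congr 1
            field_simp
            ring
          have h6 : Sy ^ (m - 1) * Sy ^ ((ν k - 1) / ν k) = Sy ^ (m - 1 / ν k) := by
            rw [← Real.rpow_add hSpos]
            congr 1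
            field_simp
            ring
          have h7 : y k ^ (ν k - 1) ≤ Sy ^ ((ν k - 1) / ν k) / w k ^ ((ν k - 1) / ν k) := by
            rw [← h4]; exact h3
          have hwe : 0 < w k ^ ((ν k - 1) / ν k) := Real.rpow_pos_of_pos (hw k hk) _
          calc m * Sy ^ (m - 1) * (w k * (ν k * y k ^ (ν k - 1)))
              ≤ m * Sy ^ (m - 1) * (w k * (ν k *
                  (Sy ^ ((ν k - 1) / ν k) / w k ^ ((ν k - 1) / ν k)))) := by
                have hSm1 : (0:ℝ) ≤ Sy ^ (m-1) := (Real.rpow_pos_of_pos hSpos _).le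
                have := (hν0 k).le
                have := (hw k hk).le
                gcongr
            _ = m * ν k * (w k / w k ^ ((ν k - 1) / ν k))
                  * (Sy ^ (m - 1) * Sy ^ ((ν k - 1) / ν k)) := by ring
            _ = W * Sy ^ (m - 1 / ν k) := by rw [h5, h6, hWdef]
        -- step 2 : bound on the remaining quotient
        have hR : Sy ^ (m - 1 / ν k) * (K ^ m * Ty ^ m) / den ^ 2
            ≤ 1 / K ^ ((1:ℝ) / ν k) := by
          have hKe : 0 < K ^ ((1:ℝ)/ν k) := Real.rpow_pos_of_pos hK _
          have hexp : m - 1 / ν k = m * (1 - θ) := by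
            rw [hθdef]; field_simp
          have hS1 : Sy ^ (m - 1 / ν k) ≤ den ^ (1 - θ) := by
            rw [hexp, Real.rpow_mul hSpos.le]
            exact Real.rpow_le_rpow ha0.le (by rw [hdendef]; linarith) (by linarith)
          have hbden : K ^ m * Ty ^ m ≤ den := by rw [hdendef]; linarith
          have hnum : Sy ^ (m - 1 / ν k) * (K ^ m * Ty ^ m) ≤ den ^ ((2:ℝ) - θ) := by
            have h8 : den ^ ((1:ℝ) - θ) * den = den ^ ((2:ℝ) - θ) := by
              nth_rewrite 2 [← Real.rpow_one den]
              rw [← Real.rpow_add hden]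
              congr 1
              ring
            calc Sy ^ (m - 1 / ν k) * (K ^ m * Ty ^ m)
                ≤ den ^ ((1:ℝ) - θ) * den :=
                  mul_le_mul hS1 hbden hb0.le (Real.rpow_nonneg hden.le _)
              _ = den ^ ((2:ℝ) - θ) := h8
          have hdensplit : (den ^ 2 : ℝ) = den ^ ((2:ℝ) - θ) * den ^ θ := by
            rw [← Real.rpow_add hden, ← Real.rpow_natCast den 2]
            norm_num
          have hKm_le : K ^ m ≤ den := by
            have h9 : (1:ℝ) ≤ Ty ^ m := Real.one_le_rpow hT1 hm0.le
            have h10 : K ^ m * 1 ≤ K ^ m * Ty ^ m :=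
              mul_le_mul_of_nonneg_left h9 (Real.rpow_pos_of_pos hK m).le
            rw [hdendef]; nlinarith [ha0]
          have hKθ : K ^ ((1:ℝ) / ν k) ≤ den ^ θ := by
            have h11 : K ^ ((1:ℝ) / ν k) = (K ^ m) ^ θ := by
              rw [← Real.rpow_mul hK.le]
              congr 1
              rw [hθdef]
              field_simp
            rw [h11]
            exact Real.rpow_le_rpow (Real.rpow_pos_of_pos hK m).le hKm_le hθpos.le
          have h12 : Sy ^ (m - 1 / ν k) * (K ^ m * Ty ^ m) / den ^ 2
              ≤ den ^ ((2:ℝ) - θ) / den ^ 2 := by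
            gcongr
          have h13 : den ^ ((2:ℝ) - θ) / den ^ 2 = 1 / den ^ θ := by
            rw [div_eq_div_iff (pow_pos hden 2).ne' (Real.rpow_pos_of_pos hden θ).ne',
              one_mul]
            exact hdensplit.symm
          have h14 : 1 / den ^ θ ≤ 1 / K ^ ((1:ℝ) / ν k) :=
            one_div_le_one_div_of_le hKe hKθ
          calc Sy ^ (m - 1 / ν k) * (K ^ m * Ty ^ m) / den ^ 2
              ≤ den ^ ((2:ℝ) - θ) / den ^ 2 := h12
            _ = 1 / den ^ θ := h13
            _ ≤ 1 / K ^ ((1:ℝ) / ν k) := h14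
        calc (K ^ m * Ty ^ m) * (m * Sy ^ (m - 1) * sk) / den ^ 2
            ≤ (K ^ m * Ty ^ m) * (W * Sy ^ (m - 1 / ν k)) / den ^ 2 := by
              gcongr
          _ = W * (Sy ^ (m - 1 / ν k) * (K ^ m * Ty ^ m) / den ^ 2) := by ring
          _ ≤ W * (1 / K ^ ((1:ℝ) / ν k)) := mul_le_mul_of_nonneg_left hR hWnn
          _ = C1 k := by rw [hC1def, hWdef]; ring
      · rw [if_neg hk]
        rw [hskdef, if_neg hk]
        simp
    have key2 : Sy ^ m * (K ^ m * (m * Ty ^ (m - 1)) * tk) / den ^ 2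
        ≤ (if k ∈ ℐ then C2 k else 0) := by
      by_cases hk : k ∈ ℐ
      · rw [if_pos hk]
        have hKik := hKinh k hk
        have hu0 : 0 < y k / Kinh k := div_pos (hy k) hKik
        have hu : (y k / Kinh k) ^ (ν k - 1) ≤ Ty := by
          rcases le_or_gt (y k / Kinh k) 1 with h | h
          · exact le_trans (Real.rpow_le_one hu0.le h (by linarith [hν k])) hT1
          · have h1 : (y k / Kinh k) ^ (ν k - 1) ≤ (y k / Kinh k) ^ ν k :=
              Real.rpow_le_rpow_of_exponent_le h.le (by linarith)
            have h2 : (y k / Kinh k) ^ ν k ≤ ∑ j ∈ ℐ, (y j / Kinh j) ^ ν j :=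
              Finset.single_le_sum
                (fun j hj => Real.rpow_nonneg (div_pos (hy j) (hKinh j hj)).le _) hk
            rw [hTydef]
            linarith
        have hTm : Ty ^ (m - 1) * Ty = Ty ^ m := by
          rw [← Real.rpow_add_one hTpos.ne']
          norm_num
        have hQ : K ^ m * (m * Ty ^ (m - 1)) * tk ≤ (m * ν k / Kinh k) * (K ^ m * Ty ^ m) := by
          rw [htkdef, if_pos hk]
          have hKm0 : (0:ℝ) < K ^ m := Real.rpow_pos_of_pos hK m
          have hTm10 : (0:ℝ) < Ty ^ (m - 1) := Real.rpow_pos_of_pos hTpos _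
          calc K ^ m * (m * Ty ^ (m - 1)) * (ν k * (y k / Kinh k) ^ (ν k - 1) * (1 / Kinh k))
              = (m * ν k / Kinh k) * (K ^ m * (Ty ^ (m - 1) * (y k / Kinh k) ^ (ν k - 1))) := by
                ring
            _ ≤ (m * ν k / Kinh k) * (K ^ m * (Ty ^ (m - 1) * Ty)) := by
                have h15 : (0:ℝ) ≤ m * ν k / Kinh k := by
                  have := (hν0 k).le; have := hKik.le; positivity
                gcongr
            _ = (m * ν k / Kinh k) * (K ^ m * Ty ^ m) := by rw [hTm]
        have hab : Sy ^ m * (K ^ m * Ty ^ m) ≤ den ^ 2 := by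
          rw [hdendef]; nlinarith [ha0, hb0]
        have h16 : (0:ℝ) ≤ m * ν k / Kinh k := by
          have := (hν0 k).le; have := hKik.le; positivity
        calc Sy ^ m * (K ^ m * (m * Ty ^ (m - 1)) * tk) / den ^ 2
            ≤ Sy ^ m * ((m * ν k / Kinh k) * (K ^ m * Ty ^ m)) / den ^ 2 := by
              gcongr
          _ = (m * ν k / Kinh k) * (Sy ^ m * (K ^ m * Ty ^ m) / den ^ 2) := by ring
          _ ≤ (m * ν k / Kinh k) * 1 := by
              refine mul_le_mul_of_nonneg_left ?_ h16
              rw [div_le_one (pow_pos hden 2)]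
              exact hab
          _ = C2 k := by rw [hC2def]; ring
      · rw [if_neg hk]
        rw [htkdef, if_neg hk]
        simp
    -- combine
    have hX0 : 0 ≤ (K ^ m * Ty ^ m) * (m * Sy ^ (m - 1) * sk) := by
      have := (Real.rpow_pos_of_pos hSpos (m-1)).le
      have := hb0.le
      positivity
    have hY0 : 0 ≤ Sy ^ m * (K ^ m * (m * Ty ^ (m - 1)) * tk) := by
      have := (Real.rpow_pos_of_pos hTpos (m-1)).le
      have := (Real.rpow_pos_of_pos hK m).le
      have := ha0.le
      positivity
    have habs : |((K ^ m * Ty ^ m) * (m * Sy ^ (m - 1) * sk)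
          - Sy ^ m * (K ^ m * (m * Ty ^ (m - 1)) * tk)) / den ^ 2|
        ≤ (K ^ m * Ty ^ m) * (m * Sy ^ (m - 1) * sk) / den ^ 2
          + Sy ^ m * (K ^ m * (m * Ty ^ (m - 1)) * tk) / den ^ 2 := by
      rw [abs_div, abs_of_pos (pow_pos hden 2), ← add_div]
      gcongr
      rw [abs_le]
      constructor <;> nlinarith [hX0, hY0]
    have hi1 : (if k ∈ 𝒜 then C1 k else 0) ≤ ∑ k ∈ 𝒜, C1 k := by
      split_ifs with h
      · exact Finset.single_le_sum hC1nn h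
      · exact hs1
    have hi2 : (if k ∈ ℐ then C2 k else 0) ≤ ∑ k ∈ ℐ, C2 k := by
      split_ifs with h
      · exact Finset.single_le_sum hC2nn h
      · exact hs2
    calc |((K ^ m * Ty ^ m) * (m * Sy ^ (m - 1) * sk)
          - Sy ^ m * (K ^ m * (m * Ty ^ (m - 1)) * tk)) / den ^ 2|
        ≤ (K ^ m * Ty ^ m) * (m * Sy ^ (m - 1) * sk) / den ^ 2
          + Sy ^ m * (K ^ m * (m * Ty ^ (m - 1)) * tk) / den ^ 2 := habs
      _ ≤ (if k ∈ 𝒜 then C1 k else 0) + (if k ∈ ℐ then C2 k else 0) := add_le_add key1 key2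
      _ ≤ 1 + ((∑ k ∈ 𝒜, C1 k) + ∑ k ∈ ℐ, C2 k) := by linarith
end

section
/- Suppose the Hill coefficients satisfy n_i ≥ 1 for all i ∈ {1,…,n} and the cooperativity coefficient satisfies m ≥ 1. Then the regulatory function H is Lipschitz continuous on the closed positive orthant ℝⁿ₊: there exists a constant L > 0 such that |H(y¹) − H(y²)| ≤ L ‖y¹ − y²‖ for all y¹, y² ∈ ℝⁿ₊ (with ‖·‖ the Euclidean norm on ℝⁿ). -/
open Real

private lemma rpow_sub_one_le' {t p : ℝ} (ht : 0 ≤ t) (hp : 1 ≤ p) :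
    t ^ (p - 1) ≤ 1 + t ^ p := by
  rcases le_or_gt t 1 with h | h
  · have h1 : t ^ (p - 1) ≤ 1 := Real.rpow_le_one ht h (by linarith)
    have h2 : 0 ≤ t ^ p := Real.rpow_nonneg ht p
    linarith
  · have h1 : t ^ (p - 1) ≤ t ^ p :=
      Real.rpow_le_rpow_of_exponent_le h.le (by linarith)
    linarith

private lemma coord_le_norm' {n : ℕ} (y : EuclideanSpace ℝ (Fin n)) (i : Fin n) :
    |y i| ≤ ‖y‖ := by
  rw [EuclideanSpace.norm_eq, ← Real.sqrt_sq_eq_abs]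
  apply Real.sqrt_le_sqrt
  have := Finset.single_le_sum (f := fun j => ‖y j‖ ^ 2)
    (fun j _ => by positivity) (Finset.mem_univ i)
  simpa [sq_abs] using this

private lemma proj_norm_le' {n : ℕ} (i : Fin n) :
    ‖(EuclideanSpace.proj i : EuclideanSpace ℝ (Fin n) →L[ℝ] ℝ)‖ ≤ 1 :=
  ContinuousLinearMap.opNorm_le_bound _ zero_le_one fun y => by
    simpa using coord_le_norm' y i

set_option maxHeartbeats 2000000 in
set_option synthInstance.maxHeartbeats 1000000 in
/-- Under `n_i ≥ 1` and `m ≥ 1`, the regulatory function `H` is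
Lipschitz continuous on the closed positive orthant, with respect to the
Euclidean norm on `ℝⁿ`. -/
theorem regulatory_function_lipschitz
    (n : ℕ) (𝒜 ℐ : Finset (Fin n))
    (w : Fin n → ℝ) (hw : ∀ i ∈ 𝒜, 0 < w i)
    (ν : Fin n → ℝ) (hν : ∀ i, 1 ≤ ν i)
    (m : ℝ) (hm : 1 ≤ m)
    (K : ℝ) (hK : 0 < K)
    (Kinh : Fin n → ℝ) (hKinh : ∀ j ∈ ℐ, 0 < Kinh j)
    (A B H : EuclideanSpace ℝ (Fin n) → ℝ)
    (hA : ∀ y, A y = (∑ i ∈ 𝒜, w i * (y i) ^ (ν i)) ^ m)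
    (hB : ∀ y, B y = K ^ m * (1 + ∑ j ∈ ℐ, (y j / Kinh j) ^ (ν j)) ^ m)
    (hH : ∀ y, H y = A y / (A y + B y)) :
    ∃ L > 0, ∀ y₁ y₂ : EuclideanSpace ℝ (Fin n),
      (∀ i, 0 ≤ y₁ i) → (∀ i, 0 ≤ y₂ i) →
      |H y₁ - H y₂| ≤ L * ‖y₁ - y₂‖ := by
  classical
  have hm0 : (0:ℝ) < m := by linarith
  have hKm : (0:ℝ) < K ^ m := Real.rpow_pos_of_pos hK m
  -- constants
  set W : ℝ := ∑ i ∈ 𝒜, (ν i * w i + ν i) with hWdef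
  set M : ℝ := ∑ j ∈ ℐ, ν j / Kinh j with hMdef
  have hW0 : 0 ≤ W := Finset.sum_nonneg fun i hi => by
    have h1 := hν i; have h2 := (hw i hi).le; nlinarith
  have hM0 : 0 ≤ M := Finset.sum_nonneg fun j hj => by
    have h1 := hν j; have h2 := hKinh j hj; positivity
  set CA : ℝ := m * W * ((K ^ m)⁻¹ + 2) with hCAdef
  set CB : ℝ := m * M with hCBdef
  have hCA0 : 0 ≤ CA := by
    apply mul_nonneg (mul_nonneg hm0.le hW0)
    have : 0 < (K ^ m)⁻¹ := inv_pos.mpr hKm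
    linarith
  have hCB0 : 0 ≤ CB := mul_nonneg hm0.le hM0
  set C : ℝ := 2 * CA + CB with hCdef
  have hC0 : 0 ≤ C := by linarith
  refine ⟨C + 1, by linarith, ?_⟩
  intro y₁ y₂ hy₁ hy₂
  set Ω : Set (EuclideanSpace ℝ (Fin n)) := {y | ∀ i, 0 ≤ y i} with hΩdef
  have hconv : Convex ℝ Ω := by
    intro x hx y hy a b ha hb hab
    intro i
    have : (a • x + b • y) i = a * x i + b * y i := by
      simp [PiLp.add_apply, PiLp.smul_apply, smul_eq_mul]
    rw [this]
    exact add_nonneg (mul_nonneg ha (hx i)) (mul_nonneg hb (hy i))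
  set F : EuclideanSpace ℝ (Fin n) → ℝ := fun y =>
    (∑ i ∈ 𝒜, w i * (y i) ^ (ν i)) ^ m *
      ((∑ i ∈ 𝒜, w i * (y i) ^ (ν i)) ^ m +
        K ^ m * (1 + ∑ j ∈ ℐ, (y j / Kinh j) ^ (ν j)) ^ m)⁻¹ with hFdef
  have hHF : ∀ y, H y = F y := fun y => by
    rw [hH, hA, hB, div_eq_mul_inv]
  -- key: at each point of the orthant, F has a derivative of norm at most C
  have key : ∀ y ∈ Ω, ∃ D : EuclideanSpace ℝ (Fin n) →L[ℝ] ℝ,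
      HasFDerivAt F D y ∧ ‖D‖ ≤ C := by
    intro y hy
    have hyi : ∀ i, 0 ≤ y i := hy
    set sv : ℝ := ∑ i ∈ 𝒜, w i * (y i) ^ (ν i) with hsvdef
    set uv : ℝ := 1 + ∑ j ∈ ℐ, (y j / Kinh j) ^ (ν j) with huvdef
    have hsv0 : 0 ≤ sv := Finset.sum_nonneg fun i hi =>
      mul_nonneg (hw i hi).le (Real.rpow_nonneg (hyi i) _)
    have huv1 : 1 ≤ uv := by
      have : 0 ≤ ∑ j ∈ ℐ, (y j / Kinh j) ^ (ν j) := Finset.sum_nonneg fun j hj =>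
        Real.rpow_nonneg (div_nonneg (hyi j) (hKinh j hj).le) _
      simp only [huvdef]; linarith
    have huv0 : 0 ≤ uv := by linarith
    have huvm1 : 1 ≤ uv ^ m := by
      calc (1:ℝ) = 1 ^ m := (Real.one_rpow m).symm
      _ ≤ uv ^ m := Real.rpow_le_rpow zero_le_one huv1 hm0.le
    have hAv0 : 0 ≤ sv ^ m := Real.rpow_nonneg hsv0 m
    set Pv : ℝ := sv ^ m + K ^ m * uv ^ m with hPvdef
    have hPv0 : 0 < Pv := by nlinarith
    have hKmP : K ^ m ≤ Pv := by nlinarith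
    have hAvP : sv ^ m ≤ Pv := by nlinarith
    have hBvP : K ^ m * uv ^ m ≤ Pv := by nlinarith
    -- derivatives of the two sums
    set Ds : EuclideanSpace ℝ (Fin n) →L[ℝ] ℝ :=
      ∑ i ∈ 𝒜, (w i * (ν i * (y i) ^ (ν i - 1))) •
        (EuclideanSpace.proj i : EuclideanSpace ℝ (Fin n) →L[ℝ] ℝ) with hDsdef
    set Du : EuclideanSpace ℝ (Fin n) →L[ℝ] ℝ :=
      ∑ j ∈ ℐ, ((ν j * ((y j) / Kinh j) ^ (ν j - 1)) * (1 / Kinh j)) •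
        (EuclideanSpace.proj j : EuclideanSpace ℝ (Fin n) →L[ℝ] ℝ) with hDudef
    have hDs : HasFDerivAt (fun y : EuclideanSpace ℝ (Fin n) =>
        ∑ i ∈ 𝒜, w i * (y i) ^ (ν i)) Ds y := by
      apply HasFDerivAt.fun_sum
      intro i _
      have hproj : HasFDerivAt (fun y : EuclideanSpace ℝ (Fin n) => y i)
          (EuclideanSpace.proj i : EuclideanSpace ℝ (Fin n) →L[ℝ] ℝ) y := by
        have h := (EuclideanSpace.proj (𝕜 := ℝ) i).hasFDerivAt (x := y); exact h
      have hg : HasDerivAt (fun t : ℝ => w i * t ^ (ν i))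
          (w i * (ν i * (y i) ^ (ν i - 1))) (y i) :=
        (Real.hasDerivAt_rpow_const (Or.inr (hν i))).const_mul (w i)
      have := hg.comp_hasFDerivAt y hproj; exact this
    have hDu : HasFDerivAt (fun y : EuclideanSpace ℝ (Fin n) =>
        1 + ∑ j ∈ ℐ, (y j / Kinh j) ^ (ν j)) Du y := by
      apply HasFDerivAt.const_add
      apply HasFDerivAt.fun_sum
      intro j _
      have hproj : HasFDerivAt (fun y : EuclideanSpace ℝ (Fin n) => y j)
          (EuclideanSpace.proj j : EuclideanSpace ℝ (Fin n) →L[ℝ] ℝ) y := by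
        have h := (EuclideanSpace.proj (𝕜 := ℝ) j).hasFDerivAt (x := y); exact h
      have hg : HasDerivAt (fun t : ℝ => (t / Kinh j) ^ (ν j))
          ((ν j * ((y j) / Kinh j) ^ (ν j - 1)) * (1 / Kinh j)) (y j) :=
        (Real.hasDerivAt_rpow_const (Or.inr (hν j))).comp (y j)
          ((hasDerivAt_id (y j)).div_const (Kinh j))
      exact hg.comp_hasFDerivAt y hproj
    -- derivatives of A, B
    set DA : EuclideanSpace ℝ (Fin n) →L[ℝ] ℝ := (m * sv ^ (m - 1)) • Ds with hDAdef
    set DB : EuclideanSpace ℝ (Fin n) →L[ℝ] ℝ :=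
      (K ^ m * (m * uv ^ (m - 1))) • Du with hDBdef
    have hA' : HasFDerivAt (fun y : EuclideanSpace ℝ (Fin n) =>
        (∑ i ∈ 𝒜, w i * (y i) ^ (ν i)) ^ m) DA y := by
      have hg : HasDerivAt (fun t : ℝ => t ^ m) (m * sv ^ (m - 1)) sv :=
        Real.hasDerivAt_rpow_const (Or.inr hm)
      exact hg.comp_hasFDerivAt y hDs
    have hB' : HasFDerivAt (fun y : EuclideanSpace ℝ (Fin n) =>
        K ^ m * (1 + ∑ j ∈ ℐ, (y j / Kinh j) ^ (ν j)) ^ m) DB y := by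
      have hg : HasDerivAt (fun t : ℝ => K ^ m * t ^ m)
          (K ^ m * (m * uv ^ (m - 1))) uv :=
        (Real.hasDerivAt_rpow_const (Or.inr hm)).const_mul (K ^ m)
      have := hg.comp_hasFDerivAt y hDu; exact this
    have hP' : HasFDerivAt (fun y : EuclideanSpace ℝ (Fin n) =>
        (∑ i ∈ 𝒜, w i * (y i) ^ (ν i)) ^ m +
          K ^ m * (1 + ∑ j ∈ ℐ, (y j / Kinh j) ^ (ν j)) ^ m) (DA + DB) y :=
      hA'.add hB'
    have hInv : HasFDerivAt (fun y : EuclideanSpace ℝ (Fin n) =>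
        ((∑ i ∈ 𝒜, w i * (y i) ^ (ν i)) ^ m +
          K ^ m * (1 + ∑ j ∈ ℐ, (y j / Kinh j) ^ (ν j)) ^ m)⁻¹)
        ((-(Pv ^ 2)⁻¹) • (DA + DB)) y := by
      have hg : HasDerivAt (fun t : ℝ => t⁻¹) (-(Pv ^ 2)⁻¹) Pv :=
        hasDerivAt_inv (ne_of_gt hPv0)
      exact hg.comp_hasFDerivAt y hP'
    set D : EuclideanSpace ℝ (Fin n) →L[ℝ] ℝ :=
      sv ^ m • ((-(Pv ^ 2)⁻¹) • (DA + DB)) + Pv⁻¹ • DA with hDdef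
    have hF' : HasFDerivAt F D y := by
      have := hA'.mul hInv
      exact this
    refine ⟨D, hF', ?_⟩
    -- norm bound for Ds
    have hDsn : ‖Ds‖ ≤ W + W * sv := by
      calc ‖Ds‖ ≤ ∑ i ∈ 𝒜, ‖(w i * (ν i * (y i) ^ (ν i - 1))) •
          (EuclideanSpace.proj i : EuclideanSpace ℝ (Fin n) →L[ℝ] ℝ)‖ :=
        norm_sum_le _ _
      _ ≤ ∑ i ∈ 𝒜, (ν i * w i + ν i * sv) := by
        apply Finset.sum_le_sum
        intro i hi
        have hc0 : 0 ≤ w i * (ν i * (y i) ^ (ν i - 1)) := by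
          have h1 := (hw i hi).le
          have h2 := hν i
          have h3 := Real.rpow_nonneg (hyi i) (ν i - 1)
          positivity
        have hsm := ContinuousLinearMap.opNorm_smul_le (w i * (ν i * (y i) ^ (ν i - 1)))
          (EuclideanSpace.proj i : EuclideanSpace ℝ (Fin n) →L[ℝ] ℝ)
        refine hsm.trans ?_
        rw [Real.norm_eq_abs, abs_of_nonneg hc0]
        have h2 : w i * (ν i * (y i) ^ (ν i - 1)) *
            ‖(EuclideanSpace.proj i : EuclideanSpace ℝ (Fin n) →L[ℝ] ℝ)‖ ≤
            w i * (ν i * (y i) ^ (ν i - 1)) :=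
          mul_le_of_le_one_right hc0 (proj_norm_le' i)
        refine h2.trans ?_
        have h3 : (y i) ^ (ν i - 1) ≤ 1 + (y i) ^ (ν i) :=
          rpow_sub_one_le' (hyi i) (hν i)
        have h4 : w i * (y i) ^ (ν i) ≤ sv :=
          Finset.single_le_sum (f := fun i => w i * (y i) ^ (ν i))
            (fun i hi => mul_nonneg (hw i hi).le (Real.rpow_nonneg (hyi i) _)) hi
        have hwi := (hw i hi).le
        have hνi := hν i
        have hν0 : (0:ℝ) ≤ ν i := by linarith
        nlinarith [mul_le_mul_of_nonneg_left h3 (mul_nonneg hwi hν0),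
          mul_le_mul_of_nonneg_left h4 hν0]
      _ ≤ W + W * sv := by
        rw [Finset.sum_add_distrib, ← Finset.sum_mul]
        have h5 : ∑ i ∈ 𝒜, ν i * w i ≤ W := by
          rw [hWdef]
          apply Finset.sum_le_sum
          intro i hi
          have := hν i
          linarith
        have h6 : ∑ i ∈ 𝒜, ν i ≤ W := by
          rw [hWdef]
          apply Finset.sum_le_sum
          intro i hi
          have h7 := hν i
          have h8 := (hw i hi).le
          nlinarith
        have h9 : (∑ i ∈ 𝒜, ν i) * sv ≤ W * sv :=
          mul_le_mul_of_nonneg_right h6 hsv0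
        linarith
    -- norm bound for Du
    have hDun : ‖Du‖ ≤ M * uv := by
      calc ‖Du‖ ≤ ∑ j ∈ ℐ, ‖((ν j * ((y j) / Kinh j) ^ (ν j - 1)) * (1 / Kinh j)) •
          (EuclideanSpace.proj j : EuclideanSpace ℝ (Fin n) →L[ℝ] ℝ)‖ :=
        norm_sum_le _ _
      _ ≤ ∑ j ∈ ℐ, (ν j / Kinh j) * uv := by
        apply Finset.sum_le_sum
        intro j hj
        have hKj := hKinh j hj
        have hνj := hν j
        have hq0 : 0 ≤ (y j / Kinh j) ^ (ν j - 1) :=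
          Real.rpow_nonneg (div_nonneg (hyi j) hKj.le) _
        have hc0 : 0 ≤ (ν j * ((y j) / Kinh j) ^ (ν j - 1)) * (1 / Kinh j) := by positivity
        have hsm := ContinuousLinearMap.opNorm_smul_le
          ((ν j * ((y j) / Kinh j) ^ (ν j - 1)) * (1 / Kinh j))
          (EuclideanSpace.proj j : EuclideanSpace ℝ (Fin n) →L[ℝ] ℝ)
        refine hsm.trans ?_
        rw [Real.norm_eq_abs, abs_of_nonneg hc0]
        have h2 : (ν j * ((y j) / Kinh j) ^ (ν j - 1)) * (1 / Kinh j) *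
            ‖(EuclideanSpace.proj j : EuclideanSpace ℝ (Fin n) →L[ℝ] ℝ)‖ ≤
            (ν j * ((y j) / Kinh j) ^ (ν j - 1)) * (1 / Kinh j) :=
          mul_le_of_le_one_right hc0 (proj_norm_le' j)
        refine h2.trans ?_
        have h3 : (y j / Kinh j) ^ (ν j - 1) ≤ 1 + (y j / Kinh j) ^ (ν j) :=
          rpow_sub_one_le' (div_nonneg (hyi j) hKj.le) hνj
        have h4 : (y j / Kinh j) ^ (ν j) ≤ ∑ j ∈ ℐ, (y j / Kinh j) ^ (ν j) :=
          Finset.single_le_sum (f := fun j => (y j / Kinh j) ^ (ν j))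
            (fun j hj => Real.rpow_nonneg (div_nonneg (hyi j) (hKinh j hj).le) _) hj
        have h5 : 1 + (y j / Kinh j) ^ (ν j) ≤ uv := by
          rw [huvdef]; linarith
        have h6 : (y j / Kinh j) ^ (ν j - 1) ≤ uv := h3.trans h5
        calc (ν j * ((y j) / Kinh j) ^ (ν j - 1)) * (1 / Kinh j)
            = (ν j / Kinh j) * ((y j / Kinh j) ^ (ν j - 1)) := by ring
          _ ≤ (ν j / Kinh j) * uv := by
            apply mul_le_mul_of_nonneg_left h6 (by positivity)
      _ = M * uv := by rw [hMdef, Finset.sum_mul]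
    clear_value W M CA CB C sv uv Pv Ds Du DA DB D
    -- power identities
    have hme : m - 1 + 1 = m := by ring
    have hpowS : sv ^ (m - 1) * sv = sv ^ m := by
      have h := Real.rpow_add' (x := sv) hsv0 (y := m - 1) (z := 1)
        (by rw [hme]; exact ne_of_gt hm0)
      rw [hme, Real.rpow_one] at h
      linarith [h]
    have hpowU : uv ^ (m - 1) * uv = uv ^ m := by
      have h := Real.rpow_add' (x := uv) huv0 (y := m - 1) (z := 1)
        (by rw [hme]; exact ne_of_gt hm0)
      rw [hme, Real.rpow_one] at h
      linarith [h]
    have hp1 : sv ^ (m - 1) ≤ 1 + sv ^ m := rpow_sub_one_le' hsv0 hm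
    have hinv1 : 1 ≤ (K ^ m)⁻¹ * Pv := by
      have h := (one_le_div hKm).mpr hKmP
      rwa [div_eq_inv_mul] at h
    have hsvm1_0 : 0 ≤ sv ^ (m - 1) := Real.rpow_nonneg hsv0 _
    have huvm1_0 : 0 ≤ uv ^ (m - 1) := Real.rpow_nonneg huv0 _
    -- norm bound for DA
    have hDA_norm : ‖DA‖ ≤ CA * Pv := by
      have h1 : ‖DA‖ ≤ ‖(m * sv ^ (m - 1) : ℝ)‖ * ‖Ds‖ := by
        rw [hDAdef]; exact ContinuousLinearMap.opNorm_smul_le _ _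
      rw [Real.norm_eq_abs, abs_of_nonneg (by positivity)] at h1
      have h3 : m * sv ^ (m - 1) * ‖Ds‖ ≤ m * sv ^ (m - 1) * (W + W * sv) :=
        mul_le_mul_of_nonneg_left hDsn (by positivity)
      have h4 : m * sv ^ (m - 1) * (W + W * sv) = m * W * (sv ^ (m - 1) + sv ^ m) := by
        rw [← hpowS]; ring
      have h6 : ‖DA‖ ≤ m * W * (sv ^ (m - 1) + sv ^ m) := by
        rw [← h4]; exact h1.trans h3
      rw [hCAdef]
      have hmW : 0 ≤ m * W := mul_nonneg hm0.le hW0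
      linarith [mul_le_mul_of_nonneg_left hp1 hmW,
        mul_le_mul_of_nonneg_left hAvP hmW,
        mul_le_mul_of_nonneg_left hinv1 hmW]
    -- norm bound for DB
    have hDB_norm : ‖DB‖ ≤ CB * Pv := by
      have h1 : ‖DB‖ ≤ ‖(K ^ m * (m * uv ^ (m - 1)) : ℝ)‖ * ‖Du‖ := by
        rw [hDBdef]; exact ContinuousLinearMap.opNorm_smul_le _ _
      rw [Real.norm_eq_abs, abs_of_nonneg (by positivity)] at h1
      have h3 : K ^ m * (m * uv ^ (m - 1)) * ‖Du‖ ≤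
          K ^ m * (m * uv ^ (m - 1)) * (M * uv) :=
        mul_le_mul_of_nonneg_left hDun (by positivity)
      have h4 : K ^ m * (m * uv ^ (m - 1)) * (M * uv) = m * M * (K ^ m * uv ^ m) := by
        rw [← hpowU]; ring
      have h6 : ‖DB‖ ≤ m * M * (K ^ m * uv ^ m) := by
        rw [← h4]; exact h1.trans h3
      rw [hCBdef]
      have hmM : 0 ≤ m * M := mul_nonneg hm0.le hM0
      linarith [mul_le_mul_of_nonneg_left hBvP hmM]
    -- combine
    have hDPn : ‖DA + DB‖ ≤ (CA + CB) * Pv := by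
      have h1 := norm_add_le DA DB
      have h2 : (CA + CB) * Pv = CA * Pv + CB * Pv := by ring
      rw [h2]
      linarith
    have hterm1 : ‖sv ^ m • ((-(Pv ^ 2)⁻¹) • (DA + DB))‖ ≤ CA + CB := by
      have h1 : ‖sv ^ m • ((-(Pv ^ 2)⁻¹) • (DA + DB))‖ ≤
          ‖(sv ^ m : ℝ)‖ * ‖(-(Pv ^ 2)⁻¹) • (DA + DB)‖ :=
        ContinuousLinearMap.opNorm_smul_le _ _
      have h2 : ‖(-(Pv ^ 2)⁻¹ : ℝ) • (DA + DB)‖ ≤ ‖(-(Pv ^ 2)⁻¹ : ℝ)‖ * ‖DA + DB‖ :=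
        ContinuousLinearMap.opNorm_smul_le _ _
      have e1 : ‖(sv ^ m : ℝ)‖ = sv ^ m := by
        rw [Real.norm_eq_abs, abs_of_nonneg hAv0]
      have e2 : ‖(-(Pv ^ 2)⁻¹ : ℝ)‖ = (Pv ^ 2)⁻¹ := by
        rw [Real.norm_eq_abs, abs_neg, abs_of_nonneg (by positivity)]
      rw [e1] at h1
      rw [e2] at h2
      have h3 : ‖(-(Pv ^ 2)⁻¹ : ℝ) • (DA + DB)‖ ≤ (Pv ^ 2)⁻¹ * ((CA + CB) * Pv) :=
        h2.trans (mul_le_mul_of_nonneg_left hDPn (by positivity))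
      have h4 : ‖sv ^ m • ((-(Pv ^ 2)⁻¹) • (DA + DB))‖ ≤
          sv ^ m * ((Pv ^ 2)⁻¹ * ((CA + CB) * Pv)) :=
        h1.trans (mul_le_mul_of_nonneg_left h3 hAv0)
      have h5 : sv ^ m * ((Pv ^ 2)⁻¹ * ((CA + CB) * Pv)) = (CA + CB) * (sv ^ m / Pv) := by
        field_simp
      have h6 : sv ^ m / Pv ≤ 1 := (div_le_one hPv0).mpr hAvP
      have h7 : (CA + CB) * (sv ^ m / Pv) ≤ (CA + CB) * 1 :=
        mul_le_mul_of_nonneg_left h6 (by linarith)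
      rw [h5] at h4
      linarith
    have hterm2 : ‖(Pv⁻¹ : ℝ) • DA‖ ≤ CA := by
      have h1 : ‖(Pv⁻¹ : ℝ) • DA‖ ≤ ‖(Pv⁻¹ : ℝ)‖ * ‖DA‖ :=
        ContinuousLinearMap.opNorm_smul_le _ _
      have e1 : ‖(Pv⁻¹ : ℝ)‖ = Pv⁻¹ := by
        rw [Real.norm_eq_abs, abs_of_nonneg (by positivity)]
      rw [e1] at h1
      have h2 : Pv⁻¹ * ‖DA‖ ≤ Pv⁻¹ * (CA * Pv) :=
        mul_le_mul_of_nonneg_left hDA_norm (by positivity)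
      have h3 : Pv⁻¹ * (CA * Pv) = CA := by field_simp
      linarith
    have hsum : ‖D‖ ≤ ‖sv ^ m • ((-(Pv ^ 2)⁻¹) • (DA + DB))‖ + ‖(Pv⁻¹ : ℝ) • DA‖ := by
      rw [hDdef]; exact norm_add_le _ _
    rw [hCdef]
    linarith
  -- apply the mean value inequality
  have hbound := Convex.norm_image_sub_le_of_norm_hasFDerivWithin_le
    (f := F) (f' := fun y => fderiv ℝ F y) (C := C) (s := Ω)
    (fun x hx => by
      obtain ⟨D, hD, _⟩ := key x hx
      show HasFDerivWithinAt F (fderiv ℝ F x) Ω x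
      rw [hD.fderiv]
      exact hD.hasFDerivWithinAt)
    (fun x hx => by
      obtain ⟨D, hD, hb⟩ := key x hx
      show ‖fderiv ℝ F x‖ ≤ C
      rw [hD.fderiv]
      exact hb)
    hconv hy₂ hy₁
  have hnn : (0:ℝ) ≤ ‖y₁ - y₂‖ := norm_nonneg _
  calc |H y₁ - H y₂| = ‖F y₁ - F y₂‖ := by rw [hHF, hHF, Real.norm_eq_abs]
    _ ≤ C * ‖y₁ - y₂‖ := hbound
    _ ≤ (C + 1) * ‖y₁ - y₂‖ := by
      have : (C + 1) * ‖y₁ - y₂‖ = C * ‖y₁ - y₂‖ + ‖y₁ - y₂‖ := by ring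
      rw [this]
      linarith
end

section
/- Suppose n_n ≥ 1 and n_l ≥ 1. Then the first partial derivatives of the Nodal-Lefty regulatory function H are uniformly bounded: there exists a constant C > 0 such that |∂H/∂y_n(a,b)| ≤ C and |∂H/∂y_l(a,b)| ≤ C for all a > 0, b > 0. -/
/-- For the Nodal-Lefty regulatory function with `n_n ≥ 1` and
`n_l ≥ 1`, the first partial derivatives are uniformly bounded on the open
positive quadrant. -/
theorem nodal_lefty_bounded_partial_derivatives
    (nn nl kn kl : ℝ) (hnn : 1 ≤ nn) (hnl : 1 ≤ nl)
    (hkn : 0 < kn) (hkl : 0 < kl)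
    (H : ℝ → ℝ → ℝ)
    (hH : ∀ yn yl, H yn yl =
      yn ^ nn / (yn ^ nn + (kn * (1 + (yl / kl) ^ nl)) ^ nn)) :
    ∃ C > 0, ∀ a b : ℝ, 0 < a → 0 < b →
      |deriv (fun t => H t b) a| ≤ C ∧ |deriv (fun t => H a t) b| ≤ C := by
  have hnn0 : (0:ℝ) < nn := lt_of_lt_of_le one_pos hnn
  have hnl0 : (0:ℝ) < nl := lt_of_lt_of_le one_pos hnl
  refine ⟨nn / kn + nn * nl / kl, by positivity, ?_⟩
  intro a b ha hb
  have hbkl : 0 < b / kl := div_pos hb hkl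
  have hsnl : 0 ≤ (b / kl) ^ nl := Real.rpow_nonneg hbkl.le nl
  set K := kn * (1 + (b / kl) ^ nl) with hKdef
  have hK : 0 < K := by
    have : (0:ℝ) < 1 + (b / kl) ^ nl := by linarith
    exact mul_pos hkn this
  have hkK : kn ≤ K := by
    have : kn * 1 ≤ kn * (1 + (b / kl) ^ nl) :=
      mul_le_mul_of_nonneg_left (by linarith) hkn.le
    simpa [hKdef] using this
  have hP : 0 < a ^ nn := Real.rpow_pos_of_pos ha nn
  have hA : 0 < a ^ (nn - 1) := Real.rpow_pos_of_pos ha (nn - 1)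
  have hc : 0 < K ^ nn := Real.rpow_pos_of_pos hK nn
  have hden : 0 < a ^ nn + K ^ nn := add_pos hP hc
  have hden2 : 0 < (a ^ nn + K ^ nn) ^ 2 := by positivity
  -- key inequality 1 : a^(nn-1) * K ≤ a^nn + K^nn
  have h1 : a ^ (nn - 1) * K ≤ a ^ nn + K ^ nn := by
    rcases le_total a K with h | h
    · have hb1 : a ^ (nn - 1) ≤ K ^ (nn - 1) :=
        Real.rpow_le_rpow ha.le h (by linarith)
      have hb2 : a ^ (nn - 1) * K ≤ K ^ (nn - 1) * K :=
        mul_le_mul_of_nonneg_right hb1 hK.le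
      have hb3 : K ^ (nn - 1) * K = K ^ nn := by
        rw [← Real.rpow_add_one hK.ne' (nn - 1), sub_add_cancel]
      linarith [hb2, hb3.le, hP.le]
    · have hb2 : a ^ (nn - 1) * K ≤ a ^ (nn - 1) * a :=
        mul_le_mul_of_nonneg_left h hA.le
      have hb3 : a ^ (nn - 1) * a = a ^ nn := by
        rw [← Real.rpow_add_one ha.ne' (nn - 1), sub_add_cancel]
      linarith [hb2, hb3.le, hc.le]
  have h2 : kn * (a ^ (nn - 1) * K ^ nn) ≤ (a ^ nn + K ^ nn) ^ 2 := by
    have h2a : a ^ (nn - 1) * K * K ^ nn ≤ (a ^ nn + K ^ nn) * (a ^ nn + K ^ nn) :=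
      mul_le_mul h1 (le_add_of_nonneg_left hP.le) hc.le hden.le
    nlinarith [mul_le_mul_of_nonneg_right hkK (mul_nonneg hA.le hc.le)]
  -- derivative w.r.t. first variable
  have hp : HasDerivAt (fun t : ℝ => t ^ nn) (nn * a ^ (nn - 1)) a := by
    simpa using Real.hasDerivAt_rpow_const (p := nn) (Or.inl ha.ne')
  have hf1 : HasDerivAt (fun t : ℝ => t ^ nn / (t ^ nn + K ^ nn))
      ((nn * a ^ (nn - 1) * (a ^ nn + K ^ nn) - a ^ nn * (nn * a ^ (nn - 1))) /
        (a ^ nn + K ^ nn) ^ 2) a :=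
    hp.div (hp.add_const (K ^ nn)) hden.ne'
  have hfun1 : (fun t => H t b) = fun t : ℝ => t ^ nn / (t ^ nn + K ^ nn) := by
    funext t; rw [hH t b, hKdef]
  have hd1 : deriv (fun t => H t b) a =
      nn * a ^ (nn - 1) * K ^ nn / (a ^ nn + K ^ nn) ^ 2 := by
    rw [hfun1, hf1.deriv]; ring
  have hbound1 : |deriv (fun t => H t b) a| ≤ nn / kn := by
    rw [hd1, abs_of_nonneg (by positivity)]
    rw [div_le_div_iff₀ hden2 hkn]
    nlinarith [mul_le_mul_of_nonneg_left h2 hnn0.le]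
  -- derivative w.r.t. second variable
  have hs1 : (b / kl) ^ (nl - 1) ≤ 1 + (b / kl) ^ nl := by
    rcases le_total (b / kl) 1 with h | h
    · have := Real.rpow_le_one hbkl.le h (by linarith : (0:ℝ) ≤ nl - 1)
      linarith
    · have := Real.rpow_le_rpow_of_exponent_le h (by linarith : nl - 1 ≤ nl)
      linarith
  have hdivb : HasDerivAt (fun t : ℝ => t / kl) (1 / kl) b := by
    simpa using (hasDerivAt_id b).div_const kl
  have hsb : HasDerivAt (fun t : ℝ => (t / kl) ^ nl)
      (1 / kl * nl * (b / kl) ^ (nl - 1)) b :=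
    hdivb.rpow_const (Or.inl hbkl.ne')
  have hg : HasDerivAt (fun t : ℝ => kn * (1 + (t / kl) ^ nl))
      (kn * (1 / kl * nl * (b / kl) ^ (nl - 1))) b :=
    (hsb.const_add 1).const_mul kn
  have hq : HasDerivAt (fun t : ℝ => (kn * (1 + (t / kl) ^ nl)) ^ nn)
      (kn * (1 / kl * nl * (b / kl) ^ (nl - 1)) * nn * K ^ (nn - 1)) b := by
    have := hg.rpow_const (p := nn) (by rw [← hKdef]; exact Or.inl hK.ne')
    simpa [← hKdef] using this
  have hf2 : HasDerivAt
      (fun t : ℝ => a ^ nn / (a ^ nn + (kn * (1 + (t / kl) ^ nl)) ^ nn))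
      ((0 * (a ^ nn + K ^ nn) -
          a ^ nn * (kn * (1 / kl * nl * (b / kl) ^ (nl - 1)) * nn * K ^ (nn - 1))) /
        (a ^ nn + K ^ nn) ^ 2) b := by
    have := (hasDerivAt_const b (a ^ nn)).div (hq.const_add (a ^ nn))
      (by rw [← hKdef]; exact hden.ne')
    simpa [← hKdef, Pi.div_def] using this
  have hfun2 : (fun t => H a t) =
      fun t : ℝ => a ^ nn / (a ^ nn + (kn * (1 + (t / kl) ^ nl)) ^ nn) := by
    funext t; rw [hH a t]
  have hd2 : deriv (fun t => H a t) b =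
      -(a ^ nn * (nn * K ^ (nn - 1) * (kn * (nl * (b / kl) ^ (nl - 1) * (1 / kl)))) /
        (a ^ nn + K ^ nn) ^ 2) := by
    rw [hfun2, hf2.deriv]; ring
  have hG1 : 0 < K ^ (nn - 1) := Real.rpow_pos_of_pos hK (nn - 1)
  have h3 : a ^ nn * K ^ (nn - 1) * (kn * (b / kl) ^ (nl - 1)) ≤
      (a ^ nn + K ^ nn) ^ 2 := by
    have hks : kn * (b / kl) ^ (nl - 1) ≤ K := by
      have := mul_le_mul_of_nonneg_left hs1 hkn.le
      simpa [hKdef] using this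
    have hstep : a ^ nn * K ^ (nn - 1) * (kn * (b / kl) ^ (nl - 1)) ≤
        a ^ nn * K ^ (nn - 1) * K :=
      mul_le_mul_of_nonneg_left hks (by positivity)
    have heq : a ^ nn * K ^ (nn - 1) * K = a ^ nn * K ^ nn := by
      rw [mul_assoc, ← Real.rpow_add_one hK.ne' (nn - 1), sub_add_cancel]
    nlinarith [sq_nonneg (a ^ nn), sq_nonneg (K ^ nn), mul_nonneg hP.le hc.le]
  have hbound2 : |deriv (fun t => H a t) b| ≤ nn * nl / kl := by
    rw [hd2, abs_neg, abs_of_nonneg (by positivity)]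
    rw [div_le_iff₀ hden2]
    have hnum : a ^ nn * (nn * K ^ (nn - 1) * (kn * (nl * (b / kl) ^ (nl - 1) * (1 / kl)))) =
        (nn * nl / kl) * (a ^ nn * K ^ (nn - 1) * (kn * (b / kl) ^ (nl - 1))) := by
      ring
    rw [hnum]
    exact mul_le_mul_of_nonneg_left h3 (by positivity)
  have hCk : 0 ≤ nn * nl / kl := by positivity
  have hCn : 0 ≤ nn / kn := by positivity
  exact ⟨le_trans hbound1 (by linarith), le_trans hbound2 (by linarith)⟩
end

section
/- The Nodal-Lefty regulatory function is Lipschitz in its first argument uniformly in the second: for all y_l ≥ 0 and all t₁, t₂ ≥ 0, |H(t₁, y_l) − H(t₂, y_l)| ≤ (n_n/k_n) |t₁ − t₂|. -/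
lemma hill_key (nn K x : ℝ) (hnn : 1 ≤ nn) (hK : 0 < K) (hx : 0 ≤ x) :
    x ^ (nn - 1) * K ^ nn * K ≤ (x ^ nn + K ^ nn) ^ 2 := by
  have hxnn : (0:ℝ) ≤ x ^ nn := Real.rpow_nonneg hx _
  have hKnn : (0:ℝ) ≤ K ^ nn := Real.rpow_nonneg hK.le _
  rcases le_total x K with h | h
  · have h1 : x ^ (nn - 1) ≤ K ^ (nn - 1) :=
      Real.rpow_le_rpow hx h (by linarith)
    have h2 : K ^ (nn - 1) * K ^ nn * K = (K ^ nn) ^ 2 := by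
      have e1 : K ^ (nn - 1) * K ^ nn * K ^ (1:ℝ) = K ^ (nn - 1 + nn + 1) := by
        rw [← Real.rpow_add hK, ← Real.rpow_add hK]
      have e2 : (K ^ nn) * (K ^ nn) = K ^ (nn + nn) := by
        rw [← Real.rpow_add hK]
      rw [Real.rpow_one] at e1
      rw [sq, e1, e2]
      congr 1; ring
    have h3 : x ^ (nn - 1) * K ^ nn * K ≤ (K ^ nn) ^ 2 := by
      rw [← h2]
      have : (0:ℝ) ≤ K ^ nn * K := mul_nonneg hKnn hK.le
      nlinarith
    nlinarith
  · have hx0 : 0 < x := lt_of_lt_of_le hK h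
    have h1 : x ^ (nn - 1) * K ≤ x ^ nn := by
      calc x ^ (nn - 1) * K ≤ x ^ (nn - 1) * x := by
            have := Real.rpow_nonneg hx (nn - 1); nlinarith
        _ = x ^ nn := by
            have e1 : x ^ (nn - 1) * x ^ (1:ℝ) = x ^ (nn - 1 + 1) := by
              rw [← Real.rpow_add hx0]
            rw [Real.rpow_one] at e1
            rw [e1]; norm_num
    have h2 : x ^ (nn - 1) * K ^ nn * K = (x ^ (nn-1) * K) * K ^ nn := by ring
    nlinarith

/-- The Nodal-Lefty regulatory function is Lipschitz in its first
argument, uniformly in the second, with Lipschitz constant `n_n / k_n`. -/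
theorem nodal_lefty_lipschitz_first_argument
    (nn nl kn kl : ℝ) (hnn : 1 ≤ nn) (hnl : 1 ≤ nl)
    (hkn : 0 < kn) (hkl : 0 < kl)
    (H : ℝ → ℝ → ℝ)
    (hH : ∀ yn yl, H yn yl =
      yn ^ nn / (yn ^ nn + (kn * (1 + (yl / kl) ^ nl)) ^ nn)) :
    ∀ yl : ℝ, 0 ≤ yl → ∀ t₁ t₂ : ℝ, 0 ≤ t₁ → 0 ≤ t₂ →
      |H t₁ yl - H t₂ yl| ≤ (nn / kn) * |t₁ - t₂| := by
  intro yl hyl t₁ t₂ ht₁ ht₂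
  set K := kn * (1 + (yl / kl) ^ nl) with hKdef
  have hK1 : kn ≤ K := by
    have : (0:ℝ) ≤ (yl / kl) ^ nl := Real.rpow_nonneg (div_nonneg hyl hkl.le) _
    nlinarith
  have hK : 0 < K := lt_of_lt_of_le hkn hK1
  have hKnn : (0:ℝ) < K ^ nn := Real.rpow_pos_of_pos hK _
  set f : ℝ → ℝ := fun x => x ^ nn / (x ^ nn + K ^ nn) with hf
  set f' : ℝ → ℝ := fun x => nn * x ^ (nn - 1) * K ^ nn / (x ^ nn + K ^ nn) ^ 2
    with hf'
  have hderiv : ∀ x ∈ Set.Ici (0:ℝ), HasDerivWithinAt f (f' x) (Set.Ici 0) x := by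
    intro x hx
    have hx0 : (0:ℝ) ≤ x := hx
    have hxnn : (0:ℝ) ≤ x ^ nn := Real.rpow_nonneg hx0 _
    have hpow : HasDerivAt (fun y : ℝ => y ^ nn) (nn * x ^ (nn - 1)) x :=
      Real.hasDerivAt_rpow_const (Or.inr hnn)
    have hden : x ^ nn + K ^ nn ≠ 0 := by positivity
    have h := (hpow.div (hpow.add_const (K ^ nn)) hden)
    have heq : (nn * x ^ (nn - 1) * (x ^ nn + K ^ nn) - x ^ nn * (nn * x ^ (nn - 1))) / (x ^ nn + K ^ nn) ^ 2 = f' x := by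
      rw [hf']; ring
    exact heq ▸ h.hasDerivWithinAt
  have hbound : ∀ x ∈ Set.Ici (0:ℝ), ‖f' x‖ ≤ nn / kn := by
    intro x hx
    have hx0 : (0:ℝ) ≤ x := hx
    have hxnn : (0:ℝ) ≤ x ^ nn := Real.rpow_nonneg hx0 _
    have hxnn1 : (0:ℝ) ≤ x ^ (nn - 1) := Real.rpow_nonneg hx0 _
    have hnn0 : (0:ℝ) < nn := lt_of_lt_of_le one_pos hnn
    have hfnn : 0 ≤ f' x := by positivity
    rw [Real.norm_eq_abs, abs_of_nonneg hfnn]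
    have key : x ^ (nn - 1) * K ^ nn * K ≤ (x ^ nn + K ^ nn) ^ 2 :=
      hill_key nn K x hnn hK hx0
    have h1 : f' x ≤ nn / K := by
      rw [hf', div_le_div_iff₀ (by positivity) hK]
      calc nn * x ^ (nn - 1) * K ^ nn * K
          = nn * (x ^ (nn - 1) * K ^ nn * K) := by ring
        _ ≤ nn * (x ^ nn + K ^ nn) ^ 2 := by nlinarith
    have h2 : nn / K ≤ nn / kn := by
      apply div_le_div_of_nonneg_left hnn0.le hkn hK1
    linarith
  have := (convex_Ici (0:ℝ)).norm_image_sub_le_of_norm_hasDerivWithin_le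
    hderiv hbound (Set.mem_Ici.mpr ht₂) (Set.mem_Ici.mpr ht₁)
  rw [hH, hH]
  simpa [Real.norm_eq_abs, hf] using this
end
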